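/- Let α ∈ (0,∞)^d and R ≥ 0. Then the hyperbolic entropy φ_α is μ-strongly convex (with respect to the Euclidean norm) on the closed Euclidean ball {β ∈ ℝ^d : ‖β‖₂ ≤ R}, with μ = 1/(4·√(R² + 4·max_i α_i⁴)); that is, for all β, β' in this ball and all t ∈ [0,1], φ_α(tβ + (1−t)β') ≤ t·φ_α(β) + (1−t)·φ_α(β') − (μ/2)·t(1−t)·‖β − β'‖₂². -/

import Mathlib

/-- The hyperbolic entropy with parameter `α ∈ (0,∞)^d`. -/
noncomputable def phiEnt {d : ℕ} (α β : Fin d → ℝ) : ℝ :=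
  (1 / 4) * ∑ i, (β i * Real.arsinh (β i / (2 * α i ^ 2)) - Real.sqrt (β i ^ 2 + 4 * α i ^ 4))

open Real Set

lemma sqrt_one_add_div_sq {b x : ℝ} (hb : 0 < b) :
    Real.sqrt (1 + (x / b) ^ 2) = Real.sqrt (x ^ 2 + b ^ 2) / b := by
  have h : 1 + (x / b) ^ 2 = (x ^ 2 + b ^ 2) / b ^ 2 := by
    field_simp; ring
  rw [h, Real.sqrt_div (by positivity), Real.sqrt_sq hb.le]

lemma hasDerivAt_arsinh_div {b : ℝ} (hb : 0 < b) (x : ℝ) :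
    HasDerivAt (fun x => Real.arsinh (x / b)) (1 / Real.sqrt (x ^ 2 + b ^ 2)) x := by
  have hs : 0 < Real.sqrt (x ^ 2 + b ^ 2) := Real.sqrt_pos.2 (by positivity)
  have h := (Real.hasDerivAt_arsinh (x / b)).comp x ((hasDerivAt_id x).div_const b)
  refine HasDerivAt.congr_deriv h ?_
  rw [sqrt_one_add_div_sq hb]
  field_simp

lemma hasDerivAt_core {b : ℝ} (hb : 0 < b) (x : ℝ) :
    HasDerivAt (fun x => x * Real.arsinh (x / b) - Real.sqrt (x ^ 2 + b ^ 2))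
      (Real.arsinh (x / b)) x := by
  have hpos : (0:ℝ) < x ^ 2 + b ^ 2 := by positivity
  have hs : 0 < Real.sqrt (x ^ 2 + b ^ 2) := Real.sqrt_pos.2 hpos
  have h2 : HasDerivAt (fun x => x * Real.arsinh (x / b))
      (1 * Real.arsinh (x / b) + x * (1 / Real.sqrt (x ^ 2 + b ^ 2))) x :=
    (hasDerivAt_id x).mul (hasDerivAt_arsinh_div hb x)
  have hx2 : HasDerivAt (fun x : ℝ => x ^ 2 + b ^ 2) (2 * x) x := by
    simpa using (hasDerivAt_pow 2 x).add_const (b ^ 2)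
  have h3 : HasDerivAt (fun x => Real.sqrt (x ^ 2 + b ^ 2))
      (x / Real.sqrt (x ^ 2 + b ^ 2)) x := by
    have h := (Real.hasDerivAt_sqrt hpos.ne').comp x hx2
    refine HasDerivAt.congr_deriv h ?_
    field_simp
  refine HasDerivAt.congr_deriv (h2.sub h3) ?_
  field_simp
  ring

/-- one-dimensional component with the 1/4 factor -/
noncomputable def fEnt (a x : ℝ) : ℝ :=
  (1 / 4) * (x * Real.arsinh (x / (2 * a ^ 2)) - Real.sqrt (x ^ 2 + 4 * a ^ 4))

lemma convexOn_g {a R μ : ℝ} (ha : 0 < a)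
    (hkey : ∀ z ∈ Icc (-R) R, μ ≤ (1 / 4) / Real.sqrt (z ^ 2 + (2 * a ^ 2) ^ 2)) :
    ConvexOn ℝ (Icc (-R) R) (fun x => fEnt a x - μ / 2 * x ^ 2) := by
  set b := 2 * a ^ 2 with hb_def
  have hb : 0 < b := by positivity
  have hb2 : ∀ x : ℝ, x ^ 2 + 4 * a ^ 4 = x ^ 2 + b ^ 2 := by intro x; rw [hb_def]; ring
  set g := fun x : ℝ => fEnt a x - μ / 2 * x ^ 2 with hg_def
  set G' := fun x : ℝ => (1 / 4) * Real.arsinh (x / b) - μ * x with hG'_def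
  have hG : ∀ x, HasDerivAt g (G' x) x := by
    intro x
    have h1 : HasDerivAt (fEnt a) ((1 / 4) * Real.arsinh (x / b)) x := by
      have h := (hasDerivAt_core hb x).const_mul (1 / 4)
      have e : fEnt a = fun y => (1 / 4) * (y * Real.arsinh (y / b) - Real.sqrt (y ^ 2 + b ^ 2)) := by
        funext y; simp only [fEnt, hb_def]; ring_nf
      rw [e]; simpa using h
    have h2 : HasDerivAt (fun x : ℝ => μ / 2 * x ^ 2) (μ * x) x := by
      have := (hasDerivAt_pow 2 x).const_mul (μ / 2)
      refine HasDerivAt.congr_deriv this ?_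
      push_cast; ring
    exact h1.sub h2
  have hG' : ∀ x, HasDerivAt G' ((1 / 4) * (1 / Real.sqrt (x ^ 2 + b ^ 2)) - μ) x := by
    intro x
    have h1 := (hasDerivAt_arsinh_div hb x).const_mul (1 / 4)
    have h2 : HasDerivAt (fun x : ℝ => μ * x) μ x := by
      simpa using (hasDerivAt_id x).const_mul μ
    exact h1.sub h2
  have e1 : deriv g = G' := funext fun x => (hG x).deriv
  have e2 : deriv (deriv g) = fun x => (1 / 4) * (1 / Real.sqrt (x ^ 2 + b ^ 2)) - μ := by
    rw [e1]; exact funext fun x => (hG' x).deriv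
  apply convexOn_of_deriv2_nonneg (convex_Icc _ _)
  · exact fun x _ => (hG x).differentiableAt.continuousAt.continuousWithinAt
  · exact fun x _ => (hG x).differentiableAt.differentiableWithinAt
  · rw [e1]; exact fun x _ => (hG' x).differentiableAt.differentiableWithinAt
  · intro x hx
    have hx' : x ∈ Icc (-R) R := interior_subset hx
    have : deriv^[2] g = deriv (deriv g) := rfl
    rw [this, e2]
    have hk := hkey x hx'
    have hs : 0 < Real.sqrt (x ^ 2 + b ^ 2) := Real.sqrt_pos.2 (by positivity)
    have : (1 / 4) / Real.sqrt (x ^ 2 + b ^ 2) = (1 / 4) * (1 / Real.sqrt (x ^ 2 + b ^ 2)) := by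
      ring
    rw [hb_def] at hk ⊢
    linarith [hk, this ▸ hk]

lemma oneD_ineq {a R μ x y t : ℝ} (ha : 0 < a)
    (hkey : ∀ z ∈ Icc (-R) R, μ ≤ (1 / 4) / Real.sqrt (z ^ 2 + (2 * a ^ 2) ^ 2))
    (hx : x ∈ Icc (-R) R) (hy : y ∈ Icc (-R) R) (ht : t ∈ Icc (0:ℝ) 1) :
    fEnt a (t * x + (1 - t) * y) ≤
      t * fEnt a x + (1 - t) * fEnt a y - μ / 2 * t * (1 - t) * (x - y) ^ 2 := by
  obtain ⟨ht0, ht1⟩ := ht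
  have hconv := convexOn_g ha hkey
  have h := hconv.2 hx hy ht0 (by linarith : (0:ℝ) ≤ 1 - t) (by ring)
  simp only [smul_eq_mul] at h
  nlinarith [h]

lemma phiEnt_eq {d : ℕ} (α β : Fin d → ℝ) : phiEnt α β = ∑ i, fEnt (α i) (β i) := by
  rw [phiEnt, Finset.mul_sum]; rfl

theorem stmt_6 {d : ℕ} (hd : 0 < d) (α : Fin d → ℝ) (hα : ∀ i, 0 < α i)
    (R : ℝ) (hR : 0 ≤ R) (μ : ℝ)
    (hμ : μ = 1 / (4 * Real.sqrt (R ^ 2 + 4 * ⨆ i, α i ^ 4))) :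
    ∀ β β' : EuclideanSpace ℝ (Fin d), ‖β‖ ≤ R → ‖β'‖ ≤ R →
      ∀ t ∈ Set.Icc (0 : ℝ) 1,
        phiEnt α (t • β + (1 - t) • β') ≤
          t * phiEnt α β + (1 - t) * phiEnt α β' -
            (μ / 2) * t * (1 - t) * ‖β - β'‖ ^ 2 := by
  intro β β' hβ hβ' t ht
  set S := ⨆ i, α i ^ 4 with hS_def
  have hSle : ∀ i, α i ^ 4 ≤ S := fun i =>
    le_ciSup (f := fun i => α i ^ 4) (Set.Finite.bddAbove (Set.finite_range _)) i
  have hS0 : 0 < S := lt_of_lt_of_le (pow_pos (hα ⟨0, hd⟩) 4) (hSle ⟨0, hd⟩)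
  have hRS : 0 < R ^ 2 + 4 * S := by nlinarith [sq_nonneg R]
  -- coordinate bounds
  have hnorm_sq : ∀ v : EuclideanSpace ℝ (Fin d), ‖v‖ ^ 2 = ∑ i, v i ^ 2 := by
    intro v
    rw [EuclideanSpace.norm_eq, Real.sq_sqrt (by positivity)]
    simp [sq_abs]
  have hcoord : ∀ (v : EuclideanSpace ℝ (Fin d)), ‖v‖ ≤ R → ∀ i, v i ∈ Icc (-R) R := by
    intro v hv i
    have h1 : v i ^ 2 ≤ ∑ j, v j ^ 2 :=
      Finset.single_le_sum (fun j _ => sq_nonneg (v j)) (Finset.mem_univ i)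
    have h2 : ∑ j, v j ^ 2 ≤ R ^ 2 := by
      rw [← hnorm_sq]
      nlinarith [norm_nonneg v]
    constructor <;> nlinarith
  -- the key bound per coordinate
  have hkey : ∀ i, ∀ z ∈ Icc (-R) R,
      μ ≤ (1 / 4) / Real.sqrt (z ^ 2 + (2 * α i ^ 2) ^ 2) := by
    intro i z hz
    have hz2 : z ^ 2 ≤ R ^ 2 := by
      obtain ⟨h1, h2⟩ := hz; nlinarith
    have harg : z ^ 2 + (2 * α i ^ 2) ^ 2 ≤ R ^ 2 + 4 * S := by
      have := hSle i; nlinarith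
    have h4 : (0:ℝ) < (2 * α i ^ 2) ^ 2 := pow_pos (by nlinarith [pow_pos (hα i) 2]) 2
    have hpos : (0:ℝ) < z ^ 2 + (2 * α i ^ 2) ^ 2 := by nlinarith [sq_nonneg z]
    have hsle : Real.sqrt (z ^ 2 + (2 * α i ^ 2) ^ 2) ≤ Real.sqrt (R ^ 2 + 4 * S) :=
      Real.sqrt_le_sqrt harg
    have hs1 : 0 < Real.sqrt (z ^ 2 + (2 * α i ^ 2) ^ 2) := Real.sqrt_pos.2 hpos
    have hs2 : 0 < Real.sqrt (R ^ 2 + 4 * S) := Real.sqrt_pos.2 hRS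
    rw [hμ, div_le_div_iff₀ (by nlinarith) (by nlinarith)]
    nlinarith [hs1, hsle]
  -- per-coordinate inequality
  obtain ⟨ht0, ht1⟩ := ht
  have happly : ∀ i : Fin d, (t • β + (1 - t) • β') i = t * β i + (1 - t) * β' i := by
    intro i; rfl
  have hsub : ∀ i : Fin d, (β - β') i = β i - β' i := fun i => rfl
  have hper : ∀ i : Fin d,
      fEnt (α i) (t * β i + (1 - t) * β' i) ≤
        t * fEnt (α i) (β i) + (1 - t) * fEnt (α i) (β' i) -
          μ / 2 * t * (1 - t) * (β i - β' i) ^ 2 := by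
    intro i
    exact oneD_ineq (hα i) (hkey i) (hcoord β hβ i) (hcoord β' hβ' i) ⟨ht0, ht1⟩
  rw [phiEnt_eq, phiEnt_eq, phiEnt_eq]
  calc ∑ i, fEnt (α i) ((t • β + (1 - t) • β') i)
      = ∑ i, fEnt (α i) (t * β i + (1 - t) * β' i) := by
        simp only [happly]
    _ ≤ ∑ i, (t * fEnt (α i) (β i) + (1 - t) * fEnt (α i) (β' i) -
          μ / 2 * t * (1 - t) * (β i - β' i) ^ 2) := Finset.sum_le_sum fun i _ => hper i
    _ = t * ∑ i, fEnt (α i) (β i) + (1 - t) * ∑ i, fEnt (α i) (β' i) -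
          (μ / 2) * t * (1 - t) * ∑ i, (β i - β' i) ^ 2 := by
        rw [Finset.sum_sub_distrib, Finset.sum_add_distrib, ← Finset.mul_sum, ← Finset.mul_sum,
          ← Finset.mul_sum]
    _ = t * ∑ i, fEnt (α i) (β i) + (1 - t) * ∑ i, fEnt (α i) (β' i) -
          (μ / 2) * t * (1 - t) * ‖β - β'‖ ^ 2 := by
        rw [hnorm_sq (β - β')]
        simp only [hsub]
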